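/- Let Q be a prime power, r and d positive integers, and β ∈ F_{Q^2} with β^{Q+1} = 1. Then x^{r+d(Q-1)} + β^{-1} x^r permutes F_{Q^2} if and only if gcd(r, Q-1) = 1, gcd(r - d, Q+1) = 1, and (-β)^{(Q+1)/gcd(Q+1, d)} ≠ 1. -/

import Mathlib

private lemma auxZ {G : Type*} [Group G] {w : G} {a b : ℤ}
    (h1 : w ^ a = 1) (h2 : w ^ b = 1) (h : Int.gcd a b = 1) : w = 1 := by
  have d3 : (orderOf w : ℤ) ∣ (Int.gcd a b : ℤ) :=
    Int.dvd_coe_gcd (orderOf_dvd_iff_zpow_eq_one.mpr h1) (orderOf_dvd_iff_zpow_eq_one.mpr h2)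
  rw [h] at d3
  have : orderOf w ∣ 1 := by exact_mod_cast d3
  exact orderOf_eq_one_iff.mp (Nat.dvd_one.mp this)

private lemma auxN {G : Type*} [Group G] {w : G} {a b : ℕ}
    (h1 : w ^ a = 1) (h2 : w ^ b = 1) (h : Nat.gcd a b = 1) : w = 1 := by
  have d3 : orderOf w ∣ Nat.gcd a b :=
    Nat.dvd_gcd (orderOf_dvd_of_pow_eq_one h1) (orderOf_dvd_of_pow_eq_one h2)
  rw [h] at d3
  exact orderOf_eq_one_iff.mp (Nat.dvd_one.mp d3)

private lemma auxSurj {G : Type*} [Group G] {m r0 : ℕ} (hco : Nat.gcd r0 m = 1)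
    {c : G} (hc : c ^ m = 1) : ∃ b : G, b ^ m = 1 ∧ b ^ r0 = c := by
  set A := Nat.gcdA r0 m with hA
  set B := Nat.gcdB r0 m with hB
  have hbez : (1 : ℤ) = r0 * A + m * B := by
    rw [← Nat.cast_one, ← hco]; exact_mod_cast Nat.gcd_eq_gcd_ab r0 m
  have hc' : c ^ (m : ℤ) = 1 := by rw [zpow_natCast]; exact hc
  refine ⟨c ^ A, ?_, ?_⟩
  · rw [← zpow_natCast (c ^ A) m, ← zpow_mul, mul_comm, zpow_mul, hc', one_zpow]
  · rw [← zpow_natCast (c ^ A) r0, ← zpow_mul]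
    have hAr : A * r0 = 1 - m * B := by linarith [hbez]
    rw [hAr, zpow_sub, zpow_one, zpow_mul, hc', one_zpow, inv_one, mul_one]

private lemma auxSmall {G : Type*} [Group G] {h : G} {N m : ℕ} (hord : orderOf h = N)
    (hm : m ∣ N) (hm1 : 1 < m) (hN : 0 < N) :
    h ^ (N / m) ≠ 1 ∧ (h ^ (N / m)) ^ m = 1 := by
  constructor
  · intro hone
    have hdvd : N ∣ N / m := by
      have := orderOf_dvd_of_pow_eq_one hone; rwa [hord] at this
    have h1 : 0 < N / m := Nat.div_pos (Nat.le_of_dvd hN hm) (by omega)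
    have h2 : N / m < N := Nat.div_lt_self hN hm1
    exact absurd (Nat.le_of_dvd h1 hdvd) (by omega)
  · rw [← pow_mul, Nat.div_mul_cancel hm, ← hord]
    exact pow_orderOf_eq_one h

private lemma auxPrim (K : Type*) [Field K] [Fintype K] (N : ℕ) (hN : 0 < N)
    (hdvd : N ∣ Nat.card Kˣ) :
    ∃ h : Kˣ, orderOf h = N ∧ ∀ u : Kˣ, u ^ N = 1 → ∃ k : ℤ, h ^ k = u := by
  obtain ⟨g, hg⟩ := IsCyclic.exists_generator (α := Kˣ)
  have hog : orderOf g = Nat.card Kˣ := by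
    exact orderOf_eq_card_of_forall_mem_zpowers hg
  have hn0 : 0 < Nat.card Kˣ := Nat.card_pos
  refine ⟨g ^ (Nat.card Kˣ / N), ?_, ?_⟩
  · rw [orderOf_pow, hog, Nat.gcd_eq_right (Nat.div_dvd_of_dvd hdvd),
      Nat.div_div_self hdvd hn0.ne']
  · have hordh : orderOf (g ^ (Nat.card Kˣ / N)) = N := by
      rw [orderOf_pow, hog, Nat.gcd_eq_right (Nat.div_dvd_of_dvd hdvd),
        Nat.div_div_self hdvd hn0.ne']
    haveI : NeZero N := ⟨hN.ne'⟩
    have hprim : IsPrimitiveRoot (g ^ (Nat.card Kˣ / N)) N := by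
      have := IsPrimitiveRoot.orderOf (g ^ (Nat.card Kˣ / N))
      rwa [hordh] at this
    intro u hu
    have hmem : u ∈ Subgroup.zpowers (g ^ (Nat.card Kˣ / N)) := by
      rw [hprim.zpowers_eq]; exact (mem_rootsOfUnity N u).mpr hu
    exact Subgroup.mem_zpowers_iff.mp hmem

private lemma auxSurjRoot (K : Type*) [Field K] [Fintype K] (s t : ℕ) (hs : 0 < s) (ht : 0 < t)
    (hcard : Nat.card Kˣ = s * t) :
    ∀ u : Kˣ, u ^ t = 1 → ∃ x : Kˣ, x ^ s = u := by
  obtain ⟨g, hg⟩ := IsCyclic.exists_generator (α := Kˣ)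
  have hog : orderOf g = s * t := by
    rw [orderOf_eq_card_of_forall_mem_zpowers hg, hcard]
  intro u hu
  obtain ⟨k, hk⟩ := Subgroup.mem_zpowers_iff.mp (hg u)
  have h1 : g ^ (k * (t : ℤ)) = 1 := by rw [zpow_mul, hk, zpow_natCast, hu]
  have h2 : ((s * t : ℕ) : ℤ) ∣ k * t := by
    have := orderOf_dvd_iff_zpow_eq_one.mpr h1
    rwa [hog] at this
  have h3 : (s : ℤ) ∣ k := by
    push_cast at h2
    exact (mul_dvd_mul_iff_right (by exact_mod_cast ht.ne' : (t : ℤ) ≠ 0)).mp h2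
  obtain ⟨j, hj⟩ := h3
  refine ⟨g ^ j, ?_⟩
  rw [← zpow_natCast (g ^ j) s, ← zpow_mul, mul_comm, ← hj, hk]

private lemma auxDRoot (K : Type*) [Field K] [Fintype K] (t d : ℕ) (ht : 0 < t)
    (hdvd : t ∣ Nat.card Kˣ) (u : Kˣ) (hu : u ^ (t / Nat.gcd t d) = 1) :
    ∃ v : Kˣ, v ^ t = 1 ∧ v ^ d = u := by
  set g0 := Nat.gcd t d with hg0def
  have hg0 : 0 < g0 := Nat.gcd_pos_of_pos_left d ht
  have hg0t : g0 ∣ t := Nat.gcd_dvd_left t d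
  obtain ⟨h, hordh, hmem⟩ := auxPrim K t ht hdvd
  have hut : u ^ t = 1 := by
    rw [← Nat.div_mul_cancel hg0t, pow_mul, hu, one_pow]
  obtain ⟨k, hk⟩ := hmem u hut
  have hht : h ^ (t : ℤ) = 1 := by
    rw [zpow_natCast, ← hordh]; exact pow_orderOf_eq_one h
  have h1 : h ^ (k * ((t / g0 : ℕ) : ℤ)) = 1 := by
    rw [zpow_mul, hk, zpow_natCast, hu]
  have h2 : (t : ℤ) ∣ k * ((t / g0 : ℕ) : ℤ) := by
    have := orderOf_dvd_iff_zpow_eq_one.mpr h1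
    rwa [hordh] at this
  have h3 : (g0 : ℤ) ∣ k := by
    have htt : (t : ℤ) = (g0 : ℤ) * ((t / g0 : ℕ) : ℤ) := by
      exact_mod_cast (Nat.mul_div_cancel' hg0t).symm
    rw [htt] at h2
    have ht0 : ((t / g0 : ℕ) : ℤ) ≠ 0 := by
      have : 0 < t / g0 := Nat.div_pos (Nat.le_of_dvd ht hg0t) hg0
      exact_mod_cast this.ne'
    exact (mul_dvd_mul_iff_right ht0).mp h2
  obtain ⟨s0, hs0⟩ := h3
  set A := Nat.gcdA t d with hA
  set B := Nat.gcdB t d with hB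
  have hbez : (g0 : ℤ) = t * A + d * B := Nat.gcd_eq_gcd_ab t d
  refine ⟨h ^ (s0 * B), ?_, ?_⟩
  · rw [← zpow_natCast (h ^ (s0 * B)) t, ← zpow_mul, mul_comm, zpow_mul, hht, one_zpow]
  · rw [← zpow_natCast (h ^ (s0 * B)) d, ← zpow_mul]
    have hk2 : k = (t : ℤ) * (s0 * A) + s0 * B * d := by rw [hs0, hbez]; ring
    have : s0 * B * (d : ℤ) = k - t * (s0 * A) := by rw [hk2]; ring
    rw [this, zpow_sub, hk, zpow_mul, hht, one_zpow, inv_one, mul_one]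
theorem stmt_16 (p e Q : ℕ) (hp : p.Prime) (he : 0 < e) (hQ : Q = p ^ e)
    (F : Type*) [Field F] [Fintype F] (hF : Fintype.card F = Q ^ 2)
    (r d : ℕ) (hr : 0 < r) (hd : 0 < d)
    (β : F) (hβ : β ^ (Q + 1) = 1) :
    Function.Bijective (fun x : F => x ^ (r + d * (Q - 1)) + β⁻¹ * x ^ r) ↔
      (Nat.gcd r (Q - 1) = 1 ∧ Int.gcd ((r : ℤ) - d) ((Q : ℤ) + 1) = 1 ∧
        (-β) ^ ((Q + 1) / Nat.gcd (Q + 1) d) ≠ 1) := by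
  classical
  have hQ2 : 2 ≤ Q := by rw [hQ]; exact Nat.one_lt_pow he.ne' hp.one_lt
  haveI : Fact p.Prime := ⟨hp⟩
  have hchar : CharP F p := by
    obtain ⟨p', hp'⟩ := CharP.exists F
    haveI := hp'
    have hp'p : p'.Prime := CharP.char_is_prime F p'
    obtain ⟨n, -, hcard⟩ := FiniteField.card F p'
    have hpp : p' = p := by
      have h1 : p' ∣ p ^ (e * 2) := by
        rw [pow_mul, ← hQ, ← hF, hcard]
        exact dvd_pow_self p' n.ne_zero
      exact (Nat.prime_dvd_prime_iff_eq hp'p hp).mp (hp'p.dvd_of_dvd_pow h1)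
    rwa [hpp] at hp'
  haveI := hchar
  haveI : ExpChar F p := ExpChar.prime hp
  have frob : ∀ a b : F, (a + b) ^ Q = a ^ Q + b ^ Q := by
    intro a b; rw [hQ]; exact add_pow_char_pow a b p e
  have hst : Q ^ 2 - 1 = (Q - 1) * (Q + 1) := by
    zify [show 1 ≤ Q ^ 2 by nlinarith, show 1 ≤ Q by omega]; ring
  have hcardU : Nat.card Fˣ = (Q - 1) * (Q + 1) := by
    rw [Nat.card_eq_fintype_card, Fintype.card_units, hF, hst]
  have hpow1 : ∀ x : F, x ≠ 0 → x ^ (Q ^ 2 - 1) = 1 := fun x hx => by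
    rw [← hF]; exact FiniteField.pow_card_sub_one_eq_one x hx
  have hmu : ∀ x : F, x ≠ 0 → (x ^ (Q - 1)) ^ (Q + 1) = 1 := fun x hx => by
    rw [← pow_mul, ← hst]; exact hpow1 x hx
  have hβ0 : β ≠ 0 := by
    intro h; rw [h, zero_pow (by omega)] at hβ; exact zero_ne_one hβ
  have hβQ : β ^ Q = β⁻¹ := by
    have h1 : β ^ Q * β = 1 := by rw [← pow_succ]; exact hβ
    exact eq_inv_of_mul_eq_one_left h1
  set f : F → F := fun x => x ^ (r + d * (Q - 1)) + β⁻¹ * x ^ r with hfdef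
  have hfx : ∀ x : F, f x = x ^ r * ((x ^ (Q - 1)) ^ d + β⁻¹) := by
    intro x
    show x ^ (r + d * (Q - 1)) + β⁻¹ * x ^ r = _
    rw [pow_add, mul_comm d (Q - 1), pow_mul, ← pow_mul, mul_comm (Q - 1) d, pow_mul]
    ring
  have hf0 : f 0 = 0 := by
    show (0 : F) ^ (r + d * (Q - 1)) + β⁻¹ * 0 ^ r = 0
    rw [zero_pow (by omega), zero_pow hr.ne']; ring
  have keyA : ∀ u : F, u ^ (Q + 1) = 1 → (u ^ d + β⁻¹) ^ Q * u ^ d = β * (u ^ d + β⁻¹) := by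
    intro u hu
    rw [frob]
    have h1 : (u ^ d) ^ Q * u ^ d = 1 := by
      rw [← pow_succ, ← pow_mul, mul_comm d (Q + 1), pow_mul, hu, one_pow]
    have h2 : (β⁻¹) ^ Q = β := by rw [inv_pow, hβQ, inv_inv]
    rw [add_mul, h1, h2, mul_add, mul_inv_cancel₀ hβ0]; ring
  have keyB : ∀ x : F, x ≠ 0 → ((x ^ (Q - 1)) ^ d + β⁻¹) ≠ 0 →
      (f x) ^ (Q - 1) * (x ^ (Q - 1)) ^ d = β * (x ^ (Q - 1)) ^ r := by
    intro x hx ht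
    have htQ : ((x ^ (Q - 1)) ^ d + β⁻¹) ^ (Q - 1) * (x ^ (Q - 1)) ^ d = β := by
      apply mul_right_cancel₀ ht
      have hpw : ((x ^ (Q - 1)) ^ d + β⁻¹) ^ (Q - 1) * ((x ^ (Q - 1)) ^ d + β⁻¹)
          = ((x ^ (Q - 1)) ^ d + β⁻¹) ^ Q := by
        rw [← pow_succ, Nat.sub_add_cancel (by omega)]
      calc ((x ^ (Q - 1)) ^ d + β⁻¹) ^ (Q - 1) * (x ^ (Q - 1)) ^ d * ((x ^ (Q - 1)) ^ d + β⁻¹)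
          = ((x ^ (Q - 1)) ^ d + β⁻¹) ^ (Q - 1) * ((x ^ (Q - 1)) ^ d + β⁻¹) * (x ^ (Q - 1)) ^ d := by
            ring
        _ = ((x ^ (Q - 1)) ^ d + β⁻¹) ^ Q * (x ^ (Q - 1)) ^ d := by rw [hpw]
        _ = β * ((x ^ (Q - 1)) ^ d + β⁻¹) := keyA _ (hmu x hx)
    calc (f x) ^ (Q - 1) * (x ^ (Q - 1)) ^ d
        = (x ^ (Q - 1)) ^ r * (((x ^ (Q - 1)) ^ d + β⁻¹) ^ (Q - 1) * (x ^ (Q - 1)) ^ d) := by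
          rw [hfx x, mul_pow, ← pow_mul, mul_comm r (Q - 1), pow_mul]; ring
      _ = β * (x ^ (Q - 1)) ^ r := by rw [htQ]; ring
  set g2 := Nat.gcd (Q + 1) d with hg2def
  have hg2dvd1 : g2 ∣ Q + 1 := Nat.gcd_dvd_left _ _
  have hg2dvdd : g2 ∣ d := Nat.gcd_dvd_right _ _
  have hdm : d * ((Q + 1) / g2) = (Q + 1) * (d / g2) := by
    rw [← Nat.mul_div_assoc d hg2dvd1, ← Nat.mul_div_assoc (Q + 1) hg2dvdd, mul_comm]
  have hx_negβ : ∀ w : F, w ^ (Q + 1) = 1 → w ^ d = -β⁻¹ → (-β) ^ ((Q + 1) / g2) = 1 := by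
    intro w hw hwd
    have h1 : (-β⁻¹) ^ ((Q + 1) / g2) = 1 := by
      rw [← hwd, ← pow_mul, hdm, pow_mul, hw, one_pow]
    have h2 : (-β) * (-β⁻¹) = 1 := by field_simp
    have h3 : (-β) ^ ((Q + 1) / g2) * (-β⁻¹) ^ ((Q + 1) / g2) = 1 := by
      rw [← mul_pow, h2, one_pow]
    rwa [h1, mul_one] at h3
  have hQQdvd : (Q + 1) ∣ Nat.card Fˣ := by rw [hcardU]; exact dvd_mul_left _ _
  rw [← Finite.injective_iff_bijective]
  constructor
  · intro hinj
    have hc3 : (-β) ^ ((Q + 1) / g2) ≠ 1 := by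
      intro hbad
      have hβinv : (-β⁻¹ : F) ≠ 0 := neg_ne_zero.mpr (inv_ne_zero hβ0)
      have hbad' : (-β⁻¹) ^ ((Q + 1) / g2) = 1 := by
        have h2 : (-β) * (-β⁻¹) = 1 := by field_simp
        have h3 : (-β) ^ ((Q + 1) / g2) * (-β⁻¹) ^ ((Q + 1) / g2) = 1 := by
          rw [← mul_pow, h2, one_pow]
        rwa [hbad, one_mul] at h3
      set νβ : Fˣ := Units.mk0 (-β⁻¹) hβinv with hνβ
      have hν1 : νβ ^ ((Q + 1) / g2) = 1 := by
        apply Units.ext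
        rw [Units.val_pow_eq_pow_val, Units.val_one, hνβ, Units.val_mk0]
        exact hbad'
      obtain ⟨v, hv1, hvd⟩ := auxDRoot F (Q + 1) d (by omega) hQQdvd νβ hν1
      obtain ⟨x, hxs⟩ := auxSurjRoot F (Q - 1) (Q + 1) (by omega) (by omega) hcardU v hv1
      have hfz : f ↑x = 0 := by
        rw [hfx]
        have hxv : ((x : F) ^ (Q - 1)) ^ d = -β⁻¹ := by
          rw [← Units.val_pow_eq_pow_val, hxs, ← Units.val_pow_eq_pow_val, hvd, hνβ,
            Units.val_mk0]
        rw [hxv]; ring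
      have h0 : f ↑x = f 0 := by rw [hfz, hf0]
      exact x.ne_zero (hinj h0)
    have hc1 : Nat.gcd r (Q - 1) = 1 := by
      by_contra hgn
      have hgpos : 0 < Nat.gcd r (Q - 1) := Nat.gcd_pos_of_pos_left _ hr
      obtain ⟨g, hg'⟩ := IsCyclic.exists_generator (α := Fˣ)
      have hog : orderOf g = (Q - 1) * (Q + 1) := by
        rw [orderOf_eq_card_of_forall_mem_zpowers hg', hcardU]
      have hdvd : Nat.gcd r (Q - 1) ∣ (Q - 1) * (Q + 1) :=
        dvd_mul_of_dvd_left (Nat.gcd_dvd_right r (Q - 1)) _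
      obtain ⟨hζne, hζpow⟩ := auxSmall hog hdvd (by omega) (Nat.mul_pos (by omega) (by omega))
      set ζ := g ^ ((Q - 1) * (Q + 1) / Nat.gcd r (Q - 1)) with hζ
      have hζr : ζ ^ r = 1 := by
        obtain ⟨c, hc⟩ := Nat.gcd_dvd_left r (Q - 1)
        rw [hc, pow_mul, hζpow, one_pow]
      have hζq : ζ ^ (Q - 1) = 1 := by
        obtain ⟨c, hc⟩ := Nat.gcd_dvd_right r (Q - 1)
        rw [hc, pow_mul, hζpow, one_pow]
      have heq : f ↑ζ = f 1 := by
        rw [hfx, hfx]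
        have e1 : (ζ : F) ^ r = 1 := by rw [← Units.val_pow_eq_pow_val, hζr, Units.val_one]
        have e2 : (ζ : F) ^ (Q - 1) = 1 := by
          rw [← Units.val_pow_eq_pow_val, hζq, Units.val_one]
        rw [e1, e2]; norm_num
      exact hζne (Units.ext (by rw [hinj heq, Units.val_one]))
    refine ⟨hc1, ?_, hc3⟩
    by_contra hg2ne
    have hnz : ∀ w : F, w ^ (Q + 1) = 1 → w ^ d + β⁻¹ ≠ 0 := fun w hw h0 =>
      hc3 (hx_negβ w hw (eq_neg_of_add_eq_zero_left h0))
    set G0 := Int.gcd ((r : ℤ) - d) ((Q : ℤ) + 1) with hG0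
    have hG0pos : 0 < G0 := Int.gcd_pos_iff.mpr (Or.inr (by exact_mod_cast (by omega : Q + 1 ≠ 0)))
    have hG0gt : 1 < G0 := by omega
    have hG0dvdQ : G0 ∣ (Q + 1) := by
      have h1 : ((G0 : ℕ) : ℤ) ∣ ((Q + 1 : ℕ) : ℤ) := by
        push_cast; exact Int.gcd_dvd_right _ _
      exact_mod_cast h1
    obtain ⟨h, hordh, -⟩ := auxPrim F (Q + 1) (by omega) hQQdvd
    obtain ⟨huneq, hupow⟩ := auxSmall hordh hG0dvdQ hG0gt (by omega)
    set u := h ^ ((Q + 1) / G0) with hudef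
    have huQ : u ^ (Q + 1) = 1 := by
      obtain ⟨c, hc⟩ := hG0dvdQ
      rw [hc, pow_mul, hupow, one_pow]
    have hurd : u ^ r = u ^ d := by
      have hdz : (G0 : ℤ) ∣ (r : ℤ) - d := Int.gcd_dvd_left _ _
      obtain ⟨c, hc⟩ := hdz
      have h1 : u ^ ((r : ℤ) - (d : ℤ)) = 1 := by
        rw [hc, zpow_mul, zpow_natCast, hupow, one_zpow]
      rw [zpow_sub, zpow_natCast, zpow_natCast, mul_inv_eq_one] at h1
      exact h1
    obtain ⟨x, hxu⟩ := auxSurjRoot F (Q - 1) (Q + 1) (by omega) (by omega) hcardU u huQ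
    have hu' : ((x : F) ^ (Q - 1)) = ↑u := by rw [← Units.val_pow_eq_pow_val, hxu]
    have huF : ((u : F)) ^ (Q + 1) = 1 := by
      rw [← Units.val_pow_eq_pow_val, huQ, Units.val_one]
    have hkx := keyB ↑x x.ne_zero (by rw [hu']; exact hnz ↑u huF)
    rw [hu'] at hkx
    have hurdF : ((u : F)) ^ r = ((u : F)) ^ d := by
      rw [← Units.val_pow_eq_pow_val, ← Units.val_pow_eq_pow_val, hurd]
    rw [hurdF] at hkx
    have hfxb : (f ↑x) ^ (Q - 1) = β :=
      mul_right_cancel₀ (pow_ne_zero d u.ne_zero) hkx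
    have hk1 := keyB 1 one_ne_zero (by simpa using hnz 1 (one_pow _))
    simp only [one_pow, mul_one] at hk1
    have hfne : f ↑x ≠ 0 := by
      rw [hfx ↑x]
      exact mul_ne_zero (pow_ne_zero _ x.ne_zero) (by rw [hu']; exact hnz ↑u huF)
    have hf1ne : f 1 ≠ 0 := by
      rw [hfx 1, one_pow, one_pow, one_mul]
      exact hnz 1 (one_pow _)
    set a : Fˣ := Units.mk0 (f ↑x) hfne with hadef
    set b : Fˣ := Units.mk0 (f 1) hf1ne with hbdef
    have hab : (a * b⁻¹) ^ (Q - 1) = 1 := by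
      apply Units.ext
      rw [Units.val_pow_eq_pow_val, Units.val_mul, Units.val_one, mul_pow,
        Units.val_inv_eq_inv_val, inv_pow, hadef, hbdef, Units.val_mk0, Units.val_mk0,
        hfxb, hk1, mul_inv_cancel₀ hβ0]
    obtain ⟨c, hcq, hcr⟩ := auxSurj hc1 hab
    have hfc : f ↑c = f ↑x := by
      rw [hfx ↑c]
      have e1 : ((c : F) ^ (Q - 1)) = 1 := by
        rw [← Units.val_pow_eq_pow_val, hcq, Units.val_one]
      have e2 : (c : F) ^ r = f ↑x * (f 1)⁻¹ := by
        have h5 := congrArg Units.val hcr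
        rw [Units.val_pow_eq_pow_val, Units.val_mul, Units.val_inv_eq_inv_val, hadef, hbdef,
          Units.val_mk0, Units.val_mk0] at h5
        exact h5
      have e3 : f 1 = 1 + β⁻¹ := by rw [hfx 1]; norm_num
      rw [e1, one_pow, e2, ← e3, mul_assoc, inv_mul_cancel₀ hf1ne, mul_one]
    have hcx : c = x := Units.ext (hinj hfc)
    rw [hcx, hxu] at hcq
    exact huneq hcq
  · rintro ⟨hc1, hc2, hc3⟩
    have hnz : ∀ w : F, w ^ (Q + 1) = 1 → w ^ d + β⁻¹ ≠ 0 := fun w hw h0 =>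
      hc3 (hx_negβ w hw (eq_neg_of_add_eq_zero_left h0))
    intro x y hxy'
    by_cases hx : x = 0
    · subst hx
      by_contra hyne
      have hy : y ≠ 0 := fun h => hyne h.symm
      have h0 : f y = 0 := by rw [← hxy', hf0]
      rw [hfx y] at h0
      exact mul_ne_zero (pow_ne_zero r hy) (hnz _ (hmu y hy)) h0
    · by_cases hy : y = 0
      · subst hy
        exfalso
        have h0 : f x = 0 := by rw [hxy', hf0]
        rw [hfx x] at h0
        exact mul_ne_zero (pow_ne_zero r hx) (hnz _ (hmu x hx)) h0
      · have hkx := keyB x hx (hnz _ (hmu x hx))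
        have hky := keyB y hy (hnz _ (hmu y hy))
        rw [hxy'] at hkx
        have hcomb : β * ((x ^ (Q - 1)) ^ r * (y ^ (Q - 1)) ^ d)
            = β * ((y ^ (Q - 1)) ^ r * (x ^ (Q - 1)) ^ d) := by
          calc β * ((x ^ (Q - 1)) ^ r * (y ^ (Q - 1)) ^ d)
              = (f y) ^ (Q - 1) * (x ^ (Q - 1)) ^ d * (y ^ (Q - 1)) ^ d := by
                rw [← mul_assoc, ← hkx]
            _ = (f y) ^ (Q - 1) * (y ^ (Q - 1)) ^ d * (x ^ (Q - 1)) ^ d := by ring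
            _ = β * ((y ^ (Q - 1)) ^ r * (x ^ (Q - 1)) ^ d) := by rw [hky, mul_assoc]
        have hUVF : (x ^ (Q - 1)) ^ r * (y ^ (Q - 1)) ^ d
            = (y ^ (Q - 1)) ^ r * (x ^ (Q - 1)) ^ d := mul_left_cancel₀ hβ0 hcomb
        set X : Fˣ := Units.mk0 x hx with hXdef
        set Y : Fˣ := Units.mk0 y hy with hYdef
        have hXv : (X : F) = x := rfl
        have hYv : (Y : F) = y := rfl
        have hUV' : (X ^ (Q - 1)) ^ r * (Y ^ (Q - 1)) ^ d
            = (Y ^ (Q - 1)) ^ r * (X ^ (Q - 1)) ^ d := by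
          apply Units.ext
          push_cast
          exact hUVF
        have hdiv : (X ^ (Q - 1)) ^ r / (X ^ (Q - 1)) ^ d
            = (Y ^ (Q - 1)) ^ r / (Y ^ (Q - 1)) ^ d :=
          div_eq_div_iff_mul_eq_mul.mpr hUV'
        have hUcard : (X ^ (Q - 1)) ^ (Q + 1) = 1 := by
          rw [← pow_mul, ← hcardU]; exact pow_card_eq_one'
        have hVcard : (Y ^ (Q - 1)) ^ (Q + 1) = 1 := by
          rw [← pow_mul, ← hcardU]; exact pow_card_eq_one'
        have hW1 : (X ^ (Q - 1) / Y ^ (Q - 1)) ^ ((r : ℤ) - (d : ℤ)) = 1 := by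
          rw [zpow_sub, zpow_natCast, zpow_natCast, div_pow, div_pow, ← div_eq_mul_inv,
            div_div_div_comm, hdiv, div_self']
        have hW2 : (X ^ (Q - 1) / Y ^ (Q - 1)) ^ ((Q : ℤ) + 1) = 1 := by
          have hn : (X ^ (Q - 1) / Y ^ (Q - 1)) ^ (Q + 1) = 1 := by
            rw [div_pow, hUcard, hVcard, div_one]
          rw [show ((Q : ℤ) + 1) = ((Q + 1 : ℕ) : ℤ) by push_cast; ring, zpow_natCast]
          exact hn
        have hUVeq : X ^ (Q - 1) = Y ^ (Q - 1) := div_eq_one.mp (auxZ hW1 hW2 hc2)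
        have huv : x ^ (Q - 1) = y ^ (Q - 1) := by
          have h5 := congrArg Units.val hUVeq
          rwa [Units.val_pow_eq_pow_val, Units.val_pow_eq_pow_val, hXv, hYv] at h5
        have hxr : x ^ r = y ^ r := by
          have h1 : f x = x ^ r * ((x ^ (Q - 1)) ^ d + β⁻¹) := hfx x
          have h2 : f y = y ^ r * ((x ^ (Q - 1)) ^ d + β⁻¹) := by rw [hfx y, huv]
          have h3 : x ^ r * ((x ^ (Q - 1)) ^ d + β⁻¹)
              = y ^ r * ((x ^ (Q - 1)) ^ d + β⁻¹) := by rw [← h1, ← h2, hxy']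
          exact mul_right_cancel₀ (hnz _ (hmu x hx)) h3
        have e1 : (X / Y) ^ r = 1 := by
          apply Units.ext
          simp only [Units.val_pow_eq_pow_val, Units.val_div_eq_div_val, Units.val_one,
            hXdef, hYdef, Units.val_mk0, div_pow]
          rw [hxr, div_self (pow_ne_zero r hy)]
        have e2 : (X / Y) ^ (Q - 1) = 1 := by
          rw [div_pow, hUVeq, div_self']
        have hXY : X = Y := div_eq_one.mp (auxN e1 e2 hc1)
        have := congrArg Units.val hXY
        rwa [hXv, hYv] at this
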